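/- Let Γ be a finite group of order p, D a finite digraph with vertex set V, α : A(D) → Γ a voltage assignment, and W a weighted matrix of D (entries w(u,v) for arcs (u,v), zero otherwise). Define, for h ∈ Γ, the matrix W_h with (u,v)-entry w(u,v) if (u,v) ∈ A(D) and α(u,v) = h, and 0 otherwise. Let W(D^α) be the matrix indexed by V × Γ with ((u,g),(v,k))-entry w(u,v) if (u,v) ∈ A(D) and k = g·α(u,v), and 0 otherwise. Then det(W(D^α)) = ∏_{j=1}^{k} det(∑_{h∈Γ} ρ_j(h) ⊗ W_h)^{d_j}, where ρ₁,…,ρ_k are the inequivalent irreducible complex representations of Γ and d_j = deg ρ_j. -/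

import Mathlib

open Kronecker

open Kronecker Matrix

/-- A matrix whose `mulVec` vanishes everywhere is zero. -/
lemma matrix_eq_zero_of_mulVec {n : Type} [Fintype n] [DecidableEq n]
    (M : Matrix n n ℂ) (h : ∀ x, M.mulVec x = 0) : M = 0 := by
  ext i j
  have := congr_fun (h (Pi.single j 1)) i
  simpa [Matrix.mulVec_single] using this

/-- Schur's lemma, matrix form: a matrix commuting with all matrices of an
irreducible family is scalar. -/
lemma schur_scalar {n : Type} [Fintype n] [DecidableEq n] {G : Type}
    (ρ : G → Matrix n n ℂ)
    (hirr : ∀ U : Submodule ℂ (n → ℂ),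
      (∀ g : G, ∀ v ∈ U, (ρ g).mulVec v ∈ U) → U = ⊥ ∨ U = ⊤)
    (T : Matrix n n ℂ) (hT : ∀ g, ρ g * T = T * ρ g) : ∃ c : ℂ, T = c • 1 := by
  rcases isEmpty_or_nonempty n with hn | hn
  · exact ⟨0, by ext i j; exact (IsEmpty.false i).elim⟩
  · obtain ⟨c, hc⟩ := Module.End.exists_eigenvalue (Matrix.mulVecLin T)
    obtain ⟨v, hv⟩ := hc.exists_hasEigenvector
    refine ⟨c, ?_⟩
    set S : Matrix n n ℂ := T - c • 1 with hS
    have hcomm : ∀ g, S * ρ g = ρ g * S := by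
      intro g
      simp only [hS, Matrix.sub_mul, Matrix.mul_sub, hT g, Matrix.smul_mul,
        Matrix.mul_smul, Matrix.one_mul, Matrix.mul_one]
    set U : Submodule ℂ (n → ℂ) := LinearMap.ker (Matrix.mulVecLin S) with hU
    have hinv : ∀ g : G, ∀ x ∈ U, (ρ g).mulVec x ∈ U := by
      intro g x hx
      simp only [hU, LinearMap.mem_ker, Matrix.mulVecLin_apply] at hx ⊢
      rw [Matrix.mulVec_mulVec, hcomm g, ← Matrix.mulVec_mulVec, hx,
        Matrix.mulVec_zero]
    have hvU : v ∈ U := by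
      simp only [hU, LinearMap.mem_ker, Matrix.mulVecLin_apply, hS,
        Matrix.sub_mulVec, Matrix.smul_mulVec, Matrix.one_mulVec]
      have := hv.apply_eq_smul
      simp only [Matrix.mulVecLin_apply] at this
      rw [this, sub_self]
    have hUne : U ≠ ⊥ := by
      intro hbot
      rw [hbot] at hvU
      exact hv.2 (by simpa using hvU)
    have hUtop : U = ⊤ := (hirr U hinv).resolve_left hUne
    have : S = 0 := by
      apply matrix_eq_zero_of_mulVec
      intro x
      have : x ∈ U := hUtop ▸ Submodule.mem_top
      simpa [hU, Matrix.mulVecLin_apply] using this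
    have := sub_eq_zero.mp (hS ▸ this)
    exact this


lemma entry_mul_std_mul {n m : Type} [Fintype n] [Fintype m] [DecidableEq n] [DecidableEq m]
    (A : Matrix n n ℂ) (B : Matrix m m ℂ) (b : n) (a' : m) (a : n) (b' : m) :
    (A * Matrix.single b a' (1:ℂ) * B) a b' = A a b * B a' b' := by
  simp [Matrix.mul_apply, Matrix.single, Finset.sum_ite_eq, ite_and,
    Finset.mul_sum, Finset.sum_mul, mul_ite, ite_mul, Finset.sum_ite_eq']

lemma intertwine_avg {Γ : Type} [Group Γ] [Fintype Γ] {n m : Type}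
    [Fintype n] [Fintype m] [DecidableEq n] [DecidableEq m]
    (ρ₁ : Γ →* Matrix n n ℂ) (ρ₂ : Γ →* Matrix m m ℂ) (X : Matrix n m ℂ) (g : Γ) :
    ρ₁ g * (∑ h : Γ, ρ₁ h * X * ρ₂ h⁻¹) = (∑ h : Γ, ρ₁ h * X * ρ₂ h⁻¹) * ρ₂ g := by
  rw [Matrix.mul_sum, Matrix.sum_mul]
  refine Fintype.sum_equiv (Equiv.mulLeft g) _ _ fun h => ?_
  have h1 : ρ₁ (g * h) = ρ₁ g * ρ₁ h := _root_.map_mul _ _ _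
  have h2 : ρ₂ ((g * h)⁻¹) * ρ₂ g = ρ₂ h⁻¹ := by
    rw [← _root_.map_mul]; congr 1; group
  simp only [Equiv.coe_mulLeft]
  rw [Matrix.mul_assoc (ρ₁ (g*h) * X), h2, h1]
  simp [Matrix.mul_assoc]

lemma ortho_ne {Γ : Type} [Group Γ] [Fintype Γ] {n m : Type}
    [Fintype n] [Fintype m] [DecidableEq n] [DecidableEq m]
    (ρ₁ : Γ →* Matrix n n ℂ) (ρ₂ : Γ →* Matrix m m ℂ)
    (hne : ∀ T : Matrix n m ℂ, (∀ g : Γ, ρ₁ g * T = T * ρ₂ g) → T = 0)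
    (a b : n) (a' b' : m) :
    ∑ g : Γ, ρ₁ g a b * ρ₂ g⁻¹ a' b' = 0 := by
  have hT := hne (∑ h : Γ, ρ₁ h * Matrix.single b a' (1:ℂ) * ρ₂ h⁻¹)
    (fun g => intertwine_avg ρ₁ ρ₂ _ g)
  have := congr_fun (congr_fun hT a) b'
  simpa [Matrix.sum_apply, entry_mul_std_mul] using this

lemma ortho_self {Γ : Type} [Group Γ] [Fintype Γ] {n : Type}
    [Fintype n] [DecidableEq n]
    (ρ : Γ →* Matrix n n ℂ)
    (hirr : ∀ U : Submodule ℂ (n → ℂ),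
      (∀ g : Γ, ∀ v ∈ U, (ρ g).mulVec v ∈ U) → U = ⊥ ∨ U = ⊤)
    (a b a' b' : n) :
    ∑ g : Γ, ρ g a b * ρ g⁻¹ a' b'
      = (Fintype.card Γ : ℂ) / (Fintype.card n : ℂ)
        * (if b = a' then 1 else 0) * (if a = b' then 1 else 0) := by
  have hnon : Nonempty n := ⟨a⟩
  have hd0 : (Fintype.card n : ℂ) ≠ 0 := by
    exact_mod_cast Fintype.card_ne_zero
  set T : Matrix n n ℂ := ∑ h : Γ, ρ h * Matrix.single b a' (1:ℂ) * ρ h⁻¹ with hTdef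
  obtain ⟨c, hc⟩ := schur_scalar (fun g => ρ g) hirr T
    (fun g => intertwine_avg ρ ρ _ g)
  have htr : T.trace = (Fintype.card Γ : ℂ) * (if b = a' then 1 else 0) := by
    rw [hTdef, Matrix.trace_sum]
    have key : ∀ h : Γ, (ρ h * Matrix.single b a' (1:ℂ) * ρ h⁻¹).trace
        = (if b = a' then 1 else 0) := by
      intro h
      rw [Matrix.trace_mul_comm, ← Matrix.mul_assoc, ← _root_.map_mul, inv_mul_cancel,
        _root_.map_one, Matrix.one_mul]
      simp [Matrix.trace, Matrix.single, Matrix.diag, ite_and,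
        Finset.sum_ite_eq, eq_comm]
    simp [key, Finset.sum_const, Finset.card_univ]
  have htr' : T.trace = c * (Fintype.card n : ℂ) := by
    rw [hc]
    simp [Matrix.trace_smul, Matrix.trace_one, smul_eq_mul]
  have hcval : c = (Fintype.card Γ : ℂ) / (Fintype.card n : ℂ) * (if b = a' then 1 else 0) := by
    rw [htr'] at htr
    field_simp
    rw [htr]
  have hentry := congr_fun (congr_fun hc a) b'
  simp only [hTdef, Matrix.sum_apply, entry_mul_std_mul] at hentry
  rw [hentry, hcval]
  by_cases hab : a = b' <;> simp [Matrix.smul_apply, Matrix.one_apply, hab] <;> ring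


lemma det_blockDiagonal'_eq {ι : Type} [Fintype ι] [DecidableEq ι] [LinearOrder ι]
    {m : ι → Type} [∀ i, Fintype (m i)] [∀ i, DecidableEq (m i)]
    (M : ∀ i, Matrix (m i) (m i) ℂ) :
    (Matrix.blockDiagonal' M).det = ∏ i, (M i).det := by
  rw [(Matrix.blockTriangular_blockDiagonal' M).det]
  have h1 : ∀ a : ι, ((Matrix.blockDiagonal' M).toSquareBlock Sigma.fst a).det
      = (M a).det := by
    intro a
    let e : m a ≃ {x : Σ i, m i // x.1 = a} :=
      { toFun := fun y => ⟨⟨a, y⟩, rfl⟩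
        invFun := fun x => cast (congrArg m x.2) x.1.2
        left_inv := fun y => rfl
        right_inv := by rintro ⟨⟨i, y⟩, rfl⟩; rfl }
    rw [← Matrix.det_submatrix_equiv_self e]
    congr 1
    ext y y'
    simp [Matrix.toSquareBlock, Matrix.toSquareBlockProp, e,
      Matrix.blockDiagonal'_apply_eq]
  have h2 : ∀ a ∈ Finset.univ, a ∉ Finset.univ.image (Sigma.fst : (Σ i, m i) → ι) →
      ((Matrix.blockDiagonal' M).toSquareBlock Sigma.fst a).det = 1 := by
    intro a _ ha
    haveI : IsEmpty {x : Σ i, m i // x.1 = a} :=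
      ⟨fun x => ha (Finset.mem_image.mpr ⟨x.1, Finset.mem_univ _, x.2⟩)⟩
    exact Matrix.det_isEmpty
  rw [Finset.prod_subset (Finset.subset_univ _) h2]
  exact Finset.prod_congr rfl fun a _ => h1 a

section Aux

variable {Γ : Type} [Group Γ] [Fintype Γ] [DecidableEq Γ] {k : ℕ} (d : Fin k → ℕ)
  (ρ : ∀ j : Fin k, Γ →* Matrix (Fin (d j)) (Fin (d j)) ℂ)

/-- Index type for matrix coefficients of the irreps. -/
abbrev IdxT (d : Fin k → ℕ) : Type := (j : Fin k) × (Fin (d j) × Fin (d j))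

/-- Matrix of matrix-coefficients of the irreps. -/
noncomputable def coeffM : Matrix Γ (IdxT d) ℂ := fun g x => ρ x.1 g x.2.1 x.2.2

/-- Candidate inverse of `coeffM`. -/
noncomputable def coeffN : Matrix (IdxT d) Γ ℂ :=
  fun x g => (d x.1 : ℂ) / (Fintype.card Γ : ℂ) * ρ x.1 g⁻¹ x.2.2 x.2.1

/-- Right regular representation matrix. -/
noncomputable def regR (h : Γ) : Matrix Γ Γ ℂ := fun g g' => if g' = g * h then 1 else 0

/-- Block diagonal matrix of the irreps (with multiplicities). -/
noncomputable def blkB (h : Γ) : Matrix (IdxT d) (IdxT d) ℂ :=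
  Matrix.blockDiagonal' fun j => (1 : Matrix (Fin (d j)) (Fin (d j)) ℂ) ⊗ₖ ρ j h

lemma coeffN_mul_coeffM
    (hirr : ∀ j : Fin k, ∀ U : Submodule ℂ (Fin (d j) → ℂ),
      (∀ g : Γ, ∀ v ∈ U, (ρ j g).mulVec v ∈ U) → U = ⊥ ∨ U = ⊤)
    (hinequiv : ∀ i j : Fin k, i ≠ j →
      ∀ T : Matrix (Fin (d i)) (Fin (d j)) ℂ,
        (∀ g : Γ, ρ i g * T = T * ρ j g) → T = 0) :
    coeffN d ρ * coeffM d ρ = 1 := by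
  have hΓ0 : (Fintype.card Γ : ℂ) ≠ 0 := by exact_mod_cast Fintype.card_ne_zero
  ext x y
  obtain ⟨i, a, b⟩ := x
  obtain ⟨j, a', b'⟩ := y
  rw [Matrix.mul_apply]
  simp only [coeffN, coeffM]
  have hfactor : ∑ g : Γ, (d i : ℂ) / (Fintype.card Γ : ℂ) * ρ i g⁻¹ b a * ρ j g a' b'
      = (d i : ℂ) / (Fintype.card Γ : ℂ) * ∑ g : Γ, ρ j g a' b' * ρ i g⁻¹ b a := by
    rw [Finset.mul_sum]; exact Finset.sum_congr rfl fun g _ => by ring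
  rw [hfactor]
  by_cases hij : j = i
  · subst hij
    rw [ortho_self (ρ j) (hirr j) a' b' b a]
    have hd0 : (d j : ℂ) ≠ 0 := by
      have : (Fintype.card (Fin (d j)) : ℂ) ≠ 0 := by
        exact_mod_cast @Fintype.card_ne_zero (Fin (d j)) _ ⟨a⟩
      simpa using this
    rw [Matrix.one_apply]
    by_cases haa : a' = a <;> by_cases hbb : b' = b <;>
      simp [haa, hbb, Sigma.ext_iff, Prod.ext_iff, Fintype.card_fin, eq_comm] <;>
      field_simp <;> ring
  · rw [ortho_ne (ρ j) (ρ i) (hinequiv j i hij) a' b' b a, mul_zero, Matrix.one_apply]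
    have : ¬((⟨i, a, b⟩ : IdxT d) = ⟨j, a', b'⟩) := by
      simp [Sigma.ext_iff]; intro h; exact absurd h.symm hij
    simp [this]

lemma regR_mul_coeffM (h : Γ) :
    regR h * coeffM d ρ = coeffM d ρ * blkB d ρ h := by
  ext g y
  obtain ⟨j, a, b⟩ := y
  have hlhs : (regR h * coeffM d ρ) g ⟨j, (a, b)⟩ = ρ j (g * h) a b := by
    rw [Matrix.mul_apply]
    simp only [regR, coeffM, ite_mul, one_mul, zero_mul]
    rw [Finset.sum_ite_eq' Finset.univ (g * h)]
    simp
  have hrhs : (coeffM d ρ * blkB d ρ h) g ⟨j, (a, b)⟩ = ρ j (g * h) a b := by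
    rw [Matrix.mul_apply, ← Finset.univ_sigma_univ, Finset.sum_sigma]
    rw [Finset.sum_eq_single j]
    · rw [_root_.map_mul, Matrix.mul_apply]
      simp only [coeffM, blkB, Matrix.blockDiagonal'_apply_eq]
      rw [← Finset.univ_product_univ, Finset.sum_product]
      simp [Matrix.kroneckerMap_apply, Matrix.one_apply, ite_mul, mul_ite,
        Finset.sum_ite_eq, Finset.sum_ite_eq', mul_comm]
    · intro j' _ hj'
      apply Finset.sum_eq_zero
      intro p _
      simp only [blkB, coeffM]
      rw [Matrix.blockDiagonal'_apply_ne _ _ _ hj', mul_zero]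
    · intro hj; exact absurd (Finset.mem_univ j) hj
  rw [hlhs, hrhs]
end Aux

/-- **Decomposition formula for the weighted matrix of a group covering** (Theorem 7).
`V` is the vertex set of a digraph with arc set `A`, `w` a weight function supported on
arcs, `α` a voltage assignment in a finite group `Γ`.  `Wh h` is the matrix of arcs with
voltage `h`, and the covering matrix on `V × Γ` has `((u,g),(v,k))`-entry `w u v` iff
`(u,v)` is an arc and `k = g * α u v`.  Given a complete system of pairwise inequivalent
irreducible complex representations `ρ_j` of `Γ` of degrees `d_j`
(with `∑ d_j² = |Γ|`), the determinant of the covering matrix is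
`∏_j det (∑_h ρ_j h ⊗ W_h) ^ d_j`. -/
theorem det_weighted_matrix_group_covering {Γ : Type} [Group Γ] [Fintype Γ] [DecidableEq Γ]
    {V : Type} [Fintype V] [DecidableEq V]
    (A : V → V → Prop) [∀ u v : V, Decidable (A u v)]
    (w : V → V → ℂ) (α : V → V → Γ)
    {k : ℕ} (d : Fin k → ℕ)
    (ρ : ∀ j : Fin k, Γ →* Matrix (Fin (d j)) (Fin (d j)) ℂ)
    (hirr : ∀ j : Fin k, ∀ U : Submodule ℂ (Fin (d j) → ℂ),
      (∀ g : Γ, ∀ v ∈ U, (ρ j g).mulVec v ∈ U) → U = ⊥ ∨ U = ⊤)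
    (hinequiv : ∀ i j : Fin k, i ≠ j →
      ∀ T : Matrix (Fin (d i)) (Fin (d j)) ℂ,
        (∀ g : Γ, ρ i g * T = T * ρ j g) → T = 0)
    (hcomplete : ∑ j : Fin k, (d j) ^ 2 = Fintype.card Γ)
    (Wh : Γ → Matrix V V ℂ)
    (hWh : ∀ h : Γ, ∀ u v : V,
      Wh h u v = if A u v ∧ α u v = h then w u v else 0)
    (Wcov : Matrix (V × Γ) (V × Γ) ℂ)
    (hWcov : ∀ p q : V × Γ,
      Wcov p q = if A p.1 q.1 ∧ q.2 = p.2 * α p.1 q.1 then w p.1 q.1 else 0) :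
    Wcov.det = ∏ j : Fin k, (∑ h : Γ, (ρ j h) ⊗ₖ (Wh h)).det ^ (d j) := by
  classical
  -- the change of basis
  have hcard : Fintype.card Γ = Fintype.card (IdxT d) := by
    rw [← hcomplete]
    simp [Fintype.card_sigma, sq]
  let e : Γ ≃ IdxT d := Fintype.equivOfCardEq hcard
  have hNM : coeffN d ρ * coeffM d ρ = 1 := coeffN_mul_coeffM d ρ hirr hinequiv
  have hMN : coeffM d ρ * coeffN d ρ = 1 :=
    (Matrix.mul_eq_one_comm_of_equiv e).mpr hNM
  -- square versions
  let Ms : Matrix Γ Γ ℂ := (coeffM d ρ).submatrix id ⇑e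
  let Ns : Matrix Γ Γ ℂ := (coeffN d ρ).submatrix ⇑e id
  have hMsNs : Ms * Ns = 1 := by
    show (coeffM d ρ).submatrix id ⇑e * (coeffN d ρ).submatrix ⇑e id = 1
    rw [Matrix.submatrix_mul_equiv (coeffM d ρ) (coeffN d ρ) id e id, hMN,
      Matrix.submatrix_id_id]
  have hdetMs : Ms.det ≠ 0 := by
    have hd : Ms.det * Ns.det = 1 := by rw [← Matrix.det_mul, hMsNs, Matrix.det_one]
    exact left_ne_zero_of_mul_eq_one hd
  let Bs : Γ → Matrix Γ Γ ℂ := fun h => (blkB d ρ h).submatrix ⇑e ⇑e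
  have hints : ∀ h : Γ, regR h * Ms = Ms * Bs h := by
    intro h
    have h1 : regR h * Ms = ((regR h : Matrix Γ Γ ℂ) * coeffM d ρ).submatrix id ⇑e := by
      have := Matrix.submatrix_mul_equiv (regR (Γ := Γ) h) (coeffM d ρ) id (Equiv.refl Γ) ⇑e
      simpa using this
    have h2 : Ms * Bs h = (coeffM d ρ * blkB d ρ h).submatrix id ⇑e :=
      Matrix.submatrix_mul_equiv (coeffM d ρ) (blkB d ρ h) id e ⇑e
    rw [h1, h2, regR_mul_coeffM]
  -- the covering matrix as a sum of Kronecker products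
  have hWcovEq : Wcov = ∑ h : Γ, (Wh h) ⊗ₖ (regR (Γ := Γ) h) := by
    ext p q
    rw [hWcov, Matrix.sum_apply]
    simp only [Matrix.kroneckerMap_apply, hWh, regR]
    by_cases hA : A p.1 q.1
    · simp only [hA, true_and, ite_mul, zero_mul]
      rw [Finset.sum_ite_eq]
      simp [mul_ite, mul_one, mul_zero]
    · simp [hA]
  -- conjugation
  let X : Matrix (V × Γ) (V × Γ) ℂ := ∑ h : Γ, (Wh h) ⊗ₖ (Bs h)
  have hconj : Wcov * ((1 : Matrix V V ℂ) ⊗ₖ Ms) = ((1 : Matrix V V ℂ) ⊗ₖ Ms) * X := by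
    rw [hWcovEq]
    calc (∑ h : Γ, (Wh h) ⊗ₖ (regR (Γ := Γ) h)) * ((1 : Matrix V V ℂ) ⊗ₖ Ms)
        = ∑ h : Γ, (Wh h * 1) ⊗ₖ (regR (Γ := Γ) h * Ms) := by
          rw [Matrix.sum_mul]
          exact Finset.sum_congr rfl fun h _ => (Matrix.mul_kronecker_mul _ _ _ _).symm
      _ = ∑ h : Γ, ((1 : Matrix V V ℂ) * Wh h) ⊗ₖ (Ms * Bs h) := by
          refine Finset.sum_congr rfl fun h _ => ?_
          rw [Matrix.mul_one, Matrix.one_mul, hints h]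
      _ = ((1 : Matrix V V ℂ) ⊗ₖ Ms) * X := by
          rw [Matrix.mul_sum]
          exact Finset.sum_congr rfl fun h _ => Matrix.mul_kronecker_mul _ _ _ _
  have hdetL : ((1 : Matrix V V ℂ) ⊗ₖ Ms).det ≠ 0 := by
    rw [Matrix.det_kronecker]
    simp only [Matrix.det_one, one_pow, one_mul]
    exact pow_ne_zero _ hdetMs
  have hdetWX : Wcov.det = X.det := by
    have h := congrArg Matrix.det hconj
    rw [Matrix.det_mul, Matrix.det_mul, mul_comm (((1 : Matrix V V ℂ) ⊗ₖ Ms).det) X.det] at h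
    exact mul_right_cancel₀ hdetL h
  -- identify X with a block diagonal matrix
  let σ0 : V × IdxT d ≃ ((j : Fin k) × (V × (Fin (d j) × Fin (d j)))) :=
    { toFun := fun p => ⟨p.2.1, (p.1, p.2.2)⟩
      invFun := fun x => (x.2.1, ⟨x.1, x.2.2⟩)
      left_inv := fun ⟨v, ⟨j, y⟩⟩ => rfl
      right_inv := fun ⟨j, v, y⟩ => rfl }
  let σ : V × Γ ≃ ((j : Fin k) × (V × (Fin (d j) × Fin (d j)))) :=
    ((Equiv.refl V).prodCongr e).trans σ0
  let Y : Matrix ((j : Fin k) × (V × (Fin (d j) × Fin (d j))))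
      ((j : Fin k) × (V × (Fin (d j) × Fin (d j)))) ℂ :=
    Matrix.blockDiagonal' fun j =>
      ∑ h : Γ, (Wh h) ⊗ₖ ((1 : Matrix (Fin (d j)) (Fin (d j)) ℂ) ⊗ₖ ρ j h)
  have hXY : X = Y.submatrix ⇑σ ⇑σ := by
    ext p q
    obtain ⟨u, gp⟩ := p
    obtain ⟨v, gq⟩ := q
    show (∑ h : Γ, (Wh h) ⊗ₖ (Bs h)) (u, gp) (v, gq) = Y (σ (u, gp)) (σ (v, gq))
    rcases hgp : e gp with ⟨i, x⟩
    rcases hgq : e gq with ⟨j, y⟩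
    have hσ1 : σ (u, gp) = ⟨i, (u, x)⟩ := by simp [σ, σ0, hgp]
    have hσ2 : σ (v, gq) = ⟨j, (v, y)⟩ := by simp [σ, σ0, hgq]
    rw [hσ1, hσ2, Matrix.sum_apply]
    have hb : ∀ h : Γ, ((Wh h) ⊗ₖ (Bs h)) (u, gp) (v, gq)
        = Wh h u v * blkB d ρ h ⟨i, x⟩ ⟨j, y⟩ := by
      intro h
      simp [Bs, Matrix.kroneckerMap_apply, hgp, hgq]
    rw [Finset.sum_congr rfl fun h _ => hb h]
    by_cases hij : i = j
    · subst hij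
      rw [show Y ⟨i, (u, x)⟩ ⟨i, (v, y)⟩
          = ∑ h : Γ, ((Wh h) ⊗ₖ ((1 : Matrix (Fin (d i)) (Fin (d i)) ℂ) ⊗ₖ ρ i h)) (u, x) (v, y)
          from by simp [Y, Matrix.blockDiagonal'_apply_eq, Matrix.sum_apply]]
      refine Finset.sum_congr rfl fun h _ => ?_
      simp [blkB, Matrix.kroneckerMap_apply, Matrix.blockDiagonal'_apply_eq]
    · rw [show Y ⟨i, (u, x)⟩ ⟨j, (v, y)⟩ = 0 from Matrix.blockDiagonal'_apply_ne _ _ _ hij]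
      exact Finset.sum_eq_zero fun h _ => by
        rw [show blkB d ρ h ⟨i, x⟩ ⟨j, y⟩ = 0 from Matrix.blockDiagonal'_apply_ne _ _ _ hij,
          mul_zero]
  have hdetXY : X.det = Y.det := by rw [hXY, Matrix.det_submatrix_equiv_self]
  have hdetY : Y.det = ∏ j : Fin k,
      (∑ h : Γ, (Wh h) ⊗ₖ ((1 : Matrix (Fin (d j)) (Fin (d j)) ℂ) ⊗ₖ ρ j h)).det :=
    det_blockDiagonal'_eq _
  -- per-block computation
  have hblock : ∀ j : Fin k,
      (∑ h : Γ, (Wh h) ⊗ₖ ((1 : Matrix (Fin (d j)) (Fin (d j)) ℂ) ⊗ₖ ρ j h)).det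
        = (∑ h : Γ, (ρ j h) ⊗ₖ (Wh h)).det ^ (d j) := by
    intro j
    let Z : Matrix (V × Fin (d j)) (V × Fin (d j)) ℂ := ∑ h : Γ, (Wh h) ⊗ₖ (ρ j h)
    let τ : V × (Fin (d j) × Fin (d j)) ≃ Fin (d j) × (V × Fin (d j)) :=
      { toFun := fun p => (p.2.1, (p.1, p.2.2))
        invFun := fun q => (q.2.1, (q.1, q.2.2))
        left_inv := fun ⟨u, a, b⟩ => rfl
        right_inv := fun ⟨a, u, b⟩ => rfl }
    have h1 : (∑ h : Γ, (Wh h) ⊗ₖ ((1 : Matrix (Fin (d j)) (Fin (d j)) ℂ) ⊗ₖ ρ j h))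
        = ((1 : Matrix (Fin (d j)) (Fin (d j)) ℂ) ⊗ₖ Z).submatrix ⇑τ ⇑τ := by
      ext ⟨u, a, b⟩ ⟨v, a', b'⟩
      rw [Matrix.sum_apply]
      simp only [Matrix.kroneckerMap_apply, Matrix.submatrix_apply, Matrix.one_apply,
        Z, τ, Equiv.coe_fn_mk, Matrix.sum_apply]
      by_cases haa : a = a' <;> simp [haa, Finset.mul_sum] <;>
        exact Finset.sum_congr rfl fun h _ => by ring
    have h2 : ((1 : Matrix (Fin (d j)) (Fin (d j)) ℂ) ⊗ₖ Z).det = Z.det ^ (d j) := by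
      rw [Matrix.det_kronecker]
      simp [Fintype.card_fin]
    have h3 : (∑ h : Γ, (ρ j h) ⊗ₖ (Wh h)).det = Z.det := by
      have heq : (∑ h : Γ, (ρ j h) ⊗ₖ (Wh h))
          = Z.submatrix ⇑(Equiv.prodComm (Fin (d j)) V) ⇑(Equiv.prodComm (Fin (d j)) V) := by
        ext ⟨b, u⟩ ⟨b', v⟩
        simp only [Matrix.sum_apply, Matrix.kroneckerMap_apply, Matrix.submatrix_apply,
          Equiv.prodComm_apply, Prod.swap_prod_mk, Z]
        exact Finset.sum_congr rfl fun h _ => by ring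
      rw [heq, Matrix.det_submatrix_equiv_self]
    rw [h1, Matrix.det_submatrix_equiv_self, h2, h3]
  rw [hdetWX, hdetXY, hdetY]
  exact Finset.prod_congr rfl fun j _ => hblock j
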